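/- Let u(x,t) := ½|x|² − t + δ R^{2−β} on the region R := (|x|² − t)^{1/2} > 2 of ℝⁿ × (−∞,0], where β ∈ (0,2), β ≠ 1, and δ > 0. Then −u_t · det(D²ₓu) = 1 + δ(2−β)(n + ½) R^{−β} + δ(β−2)β R^{−β−2}|x|² + O(R^{−2β}) as R → ∞; in particular −u_t det D²ₓu = 1 + O(R^{−β}) while u − (½|x|² − t) = δ R^{2−β} is exactly of order R^{2−β}. -/

import Mathlib

open Real

private lemma key_est (k : ℕ) {ε η m : ℝ} (hm : m ≤ 1/2) (hε : |ε| ≤ m) (hη : |η| ≤ m) :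
    |(1+ε)*(1+2*ε)^k*(1+2*ε+η) - (1 + (2*(k:ℝ)+3)*ε + η)| ≤ 10*3^k*((k:ℝ)+1) * m^2 := by
  have hm0 : 0 ≤ m := le_trans (abs_nonneg _) hε
  have h1 := abs_le.mp hε
  have h2 := abs_le.mp hη
  induction k with
  | zero =>
    rw [abs_le]
    constructor <;> push_cast <;> nlinarith [sq_nonneg ε, sq_nonneg (ε-η), sq_nonneg (ε+η), sq_nonneg m]
  | succ k ih =>
    have key : (1+ε)*(1+2*ε)^(k+1)*(1+2*ε+η) - (1 + (2*((k+1:ℕ):ℝ)+3)*ε + η)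
        = (1+2*ε) * ((1+ε)*(1+2*ε)^k*(1+2*ε+η) - (1 + (2*(k:ℝ)+3)*ε + η))
          + 2*ε*((2*(k:ℝ)+3)*ε + η) := by push_cast; ring
    rw [key]
    have hA : |1+2*ε| ≤ 2 := by rw [abs_le]; constructor <;> linarith
    have hB : |2*ε*((2*(k:ℝ)+3)*ε + η)| ≤ 2*m*((2*(k:ℝ)+3)*m + m) := by
      rw [abs_mul]
      have e1 : |2*ε| ≤ 2*m := by rw [abs_mul]; simp only [abs_two]; nlinarith [abs_le.mpr h1]
      have e2 : |(2*(k:ℝ)+3)*ε + η| ≤ (2*(k:ℝ)+3)*m + m := by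
        calc |(2*(k:ℝ)+3)*ε + η| ≤ |(2*(k:ℝ)+3)*ε| + |η| := abs_add_le _ _
          _ ≤ (2*(k:ℝ)+3)*m + m := by
              rw [abs_mul, abs_of_nonneg (show (0:ℝ) ≤ 2*(k:ℝ)+3 by positivity)]
              gcongr
      exact mul_le_mul e1 e2 (abs_nonneg _) (by positivity)
    have h3k : (1:ℝ) ≤ 3^k := one_le_pow₀ (by norm_num : (1:ℝ) ≤ 3)
    calc |(1+2*ε) * ((1+ε)*(1+2*ε)^k*(1+2*ε+η) - (1 + (2*(k:ℝ)+3)*ε + η)) + 2*ε*((2*(k:ℝ)+3)*ε + η)|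
        ≤ |1+2*ε| * |(1+ε)*(1+2*ε)^k*(1+2*ε+η) - (1 + (2*(k:ℝ)+3)*ε + η)| + |2*ε*((2*(k:ℝ)+3)*ε + η)| := by
          rw [← abs_mul]; exact abs_add_le _ _
      _ ≤ 2 * (10*3^k*((k:ℝ)+1) * m^2) + 2*m*((2*(k:ℝ)+3)*m + m) :=
          add_le_add (mul_le_mul hA ih (abs_nonneg _) (by norm_num)) hB
      _ ≤ 10*3^(k+1)*(((k+1:ℕ):ℝ)+1) * m^2 := by
          push_cast
          have hf : (4*(k:ℝ)+8)*m^2 ≤ (10*(k:ℝ)+40)*3^k*m^2 := by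
            apply mul_le_mul_of_nonneg_right _ (sq_nonneg m)
            nlinarith [Nat.cast_nonneg (α := ℝ) k]
          rw [pow_succ (3:ℝ) k]
          nlinarith [hf, mul_nonneg (pow_nonneg (by norm_num : (0:ℝ) ≤ 3) k) (sq_nonneg m)]

set_option maxHeartbeats 2000000 in
theorem sharpness_example_beta_ne_one (n : ℕ) (hn : 1 ≤ n) (β δ : ℝ)
    (hβ : 0 < β ∧ β < 2) (hβ1 : β ≠ 1) (hδ : 0 < δ) :
    ∃ C > 0, ∃ R₀ > 2, ∀ (x : EuclideanSpace ℝ (Fin n)) (t : ℝ), t ≤ 0 →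
      R₀ ≤ Real.sqrt (‖x‖ ^ 2 - t) →
      letI u : EuclideanSpace ℝ (Fin n) → ℝ → ℝ :=
        fun y s => ‖y‖ ^ 2 / 2 - s + δ * (‖y‖ ^ 2 - s) ^ ((2 - β) / 2)
      letI R : ℝ := Real.sqrt (‖x‖ ^ 2 - t)
      |(-(deriv (fun s => u x s) t)) *
          (Matrix.det (Matrix.of fun i j : Fin n =>
            fderiv ℝ (fun y => fderiv ℝ (fun z => u z t) y (EuclideanSpace.single j 1)) x
              (EuclideanSpace.single i 1))) -
        (1 + δ * (2 - β) * ((n : ℝ) + 1 / 2) * R ^ (-β) +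
          δ * (β - 2) * β * R ^ (-β - 2) * ‖x‖ ^ 2)| ≤ C * R ^ (-(2 * β)) := by
  obtain ⟨hβ0, hβ2⟩ := hβ
  have h2β : (0:ℝ) < 2 - β := by linarith
  obtain ⟨k, rfl⟩ : ∃ k, n = k + 1 := ⟨n - 1, (Nat.succ_pred_eq_of_pos hn).symm⟩
  refine ⟨10*3^k*((k:ℝ)+1)*δ^2, by positivity, 3 + (2*δ)^(β⁻¹ : ℝ),
    by nlinarith [Real.rpow_nonneg (by positivity : (0:ℝ) ≤ 2*δ) (β⁻¹ : ℝ)], fun x t ht hR => ?_⟩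
  simp only []
  set p : ℝ := (2-β)/2 - 1 with hp_def
  set s : ℝ := ‖x‖^2 - t with hs_def
  have hs0 : (0:ℝ) < s := by
    by_contra h
    push_neg at h
    rw [show Real.sqrt s = 0 from Real.sqrt_eq_zero'.mpr h] at hR
    nlinarith [Real.rpow_nonneg (by positivity : (0:ℝ) ≤ 2*δ) (β⁻¹ : ℝ)]
  have hR0 : (0:ℝ) < Real.sqrt s := Real.sqrt_pos.mpr hs0
  have hpβ : p * 2 = -β := by rw [hp_def]; ring
  -- rpow facts
  have hpow : ∀ q : ℝ, Real.sqrt s ^ q = s ^ (q/2) := by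
    intro q
    rw [Real.sqrt_eq_rpow, ← Real.rpow_mul hs0.le]
    congr 1
    ring
  have hsp : (0:ℝ) < s ^ p := Real.rpow_pos_of_pos hs0 p
  have hsp1 : (0:ℝ) < s ^ (p-1) := Real.rpow_pos_of_pos hs0 (p-1)
  have hsplit : s ^ p = s ^ (p-1) * s := by
    have h := Real.rpow_add hs0 (p-1) 1
    rw [Real.rpow_one] at h
    have e : p - 1 + 1 = p := by ring
    rw [e] at h
    exact h
  -- time derivative
  have hderiv : deriv (fun s' => ‖x‖^2/2 - s' + δ*(‖x‖^2 - s')^((2-β)/2)) t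
      = -1 + δ*((-1) * ((2-β)/2) * s^p) := by
    have h1 : HasDerivAt (fun s' : ℝ => ‖x‖^2 - s') (-1) t := by
      simpa using (hasDerivAt_id t).const_sub (‖x‖^2)
    have h2 := h1.rpow_const (p := (2-β)/2) (Or.inl hs0.ne')
    have h3 : HasDerivAt (fun s' : ℝ => ‖x‖^2/2 - s') (-1) t := by
      simpa using (hasDerivAt_id t).const_sub (‖x‖^2/2)
    exact (h3.add (h2.const_mul δ)).deriv
  -- gradient
  have hgrad : ∀ y : EuclideanSpace ℝ (Fin (k+1)), 0 < ‖y‖^2 - t →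
      HasFDerivAt (fun z : EuclideanSpace ℝ (Fin (k+1)) => ‖z‖^2/2 - t + δ*(‖z‖^2 - t)^((2-β)/2))
        ((1/2 + δ*(1 * ((2-β)/2) * (‖y‖^2-t)^((2-β)/2-1))) • (2 • innerSL ℝ y)) y := by
    intro y hy
    have hns : HasFDerivAt (fun z : EuclideanSpace ℝ (Fin (k+1)) => ‖z‖^2) (2 • innerSL ℝ y) y :=
      (hasStrictFDerivAt_norm_sq y).hasFDerivAt
    have hφ : HasDerivAt (fun q : ℝ => q/2 - t + δ*(q - t)^((2-β)/2))
        (1/2 + δ*(1 * ((2-β)/2) * (‖y‖^2-t)^((2-β)/2-1))) (‖y‖^2) := by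
      have h1 : HasDerivAt (fun q : ℝ => q/2 - t) (1/2) (‖y‖^2) := by
        simpa using ((hasDerivAt_id (‖y‖^2)).div_const 2).sub_const t
      have h2 : HasDerivAt (fun q : ℝ => q - t) 1 (‖y‖^2) := by
        simpa using (hasDerivAt_id (‖y‖^2)).sub_const t
      have h3 := h2.rpow_const (p := (2-β)/2) (Or.inl hy.ne')
      exact h1.add (h3.const_mul δ)
    exact hφ.comp_hasFDerivAt y hns
  have hopen : IsOpen {y : EuclideanSpace ℝ (Fin (k+1)) | 0 < ‖y‖^2 - t} :=
    isOpen_lt continuous_const (by continuity)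
  have hxmem : x ∈ {y : EuclideanSpace ℝ (Fin (k+1)) | 0 < ‖y‖^2 - t} := hs0
  have hev : ∀ j : Fin (k+1),
      (fun y : EuclideanSpace ℝ (Fin (k+1)) =>
        fderiv ℝ (fun z => ‖z‖^2/2 - t + δ*(‖z‖^2 - t)^((2-β)/2)) y (EuclideanSpace.single j 1))
      =ᶠ[nhds x] (fun y => (1 + δ*(2-β)*(‖y‖^2-t)^((2-β)/2-1)) * y j) := by
    intro j
    filter_upwards [hopen.mem_nhds hxmem] with y hy
    rw [(hgrad y hy).fderiv]
    simp [EuclideanSpace.inner_single_right, real_inner_comm]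
    ring
  -- Hessian entries
  set a : ℝ := 1 + δ*(2-β)*s^p with ha_def
  set b : ℝ := (δ*(2-β)) * (p * s^(p-1)) * 2 with hb_def
  have ha0 : 0 < a := by
    have h : 0 < δ*(2-β)*s^p := by positivity
    linarith
  have hHess : ∀ i j : Fin (k+1),
      fderiv ℝ (fun y : EuclideanSpace ℝ (Fin (k+1)) =>
        fderiv ℝ (fun z => ‖z‖^2/2 - t + δ*(‖z‖^2 - t)^((2-β)/2)) y (EuclideanSpace.single j 1)) x
        (EuclideanSpace.single i 1)
      = a * (if j = i then 1 else 0) + b * x i * x j := by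
    intro i j
    rw [(hev j).fderiv_eq]
    have hns : HasFDerivAt (fun z : EuclideanSpace ℝ (Fin (k+1)) => ‖z‖^2) (2 • innerSL ℝ x) x :=
      (hasStrictFDerivAt_norm_sq x).hasFDerivAt
    have h2 : HasFDerivAt (fun z : EuclideanSpace ℝ (Fin (k+1)) => ‖z‖^2 - t) (2 • innerSL ℝ x) x :=
      hns.sub_const t
    have h3 := h2.rpow_const (p := (2-β)/2-1) (Or.inl hs0.ne')
    have hc : HasFDerivAt (fun y : EuclideanSpace ℝ (Fin (k+1)) => 1 + δ*(2-β)*(‖y‖^2-t)^((2-β)/2-1))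
        ((δ*(2-β)) • ((((2-β)/2-1) * (‖x‖^2-t)^((2-β)/2-1-1)) • (2 • innerSL ℝ x))) x :=
      (h3.const_mul (δ*(2-β))).const_add 1
    have hcoord : HasFDerivAt (fun y : EuclideanSpace ℝ (Fin (k+1)) => y j)
        (PiLp.proj (𝕜 := ℝ) 2 (fun _ : Fin (k+1) => ℝ) j) x :=
      ((PiLp.proj (𝕜 := ℝ) 2 (fun _ : Fin (k+1) => ℝ) j).hasFDerivAt (x := x)).congr_of_eventuallyEq
        (Filter.Eventually.of_forall fun y => rfl)
    rw [HasFDerivAt.fderiv (f := fun y : EuclideanSpace ℝ (Fin (k+1)) => (1 + δ*(2-β)*(‖y‖^2-t)^((2-β)/2-1)) * y j) (hc.mul hcoord)]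
    simp [EuclideanSpace.inner_single_right, EuclideanSpace.single_apply, PiLp.proj_apply,
      ha_def, hb_def, hp_def]
    ring
  -- determinant
  have hdet : Matrix.det (Matrix.of fun i j : Fin (k+1) =>
        a * (if j = i then 1 else 0) + b * x i * x j)
      = a^(k+1) * (1 + b/a * ‖x‖^2) := by
    have hnorm : ∑ i, x i * x i = ‖x‖^2 := by
      have h := real_inner_self_eq_norm_sq x
      rw [PiLp.inner_apply] at h
      simpa [← sq] using h
    have hM : (Matrix.of fun i j : Fin (k+1) => a * (if j = i then 1 else 0) + b * x i * x j)
        = a • (1 + Matrix.replicateCol Unit (fun i => (b/a) * x i) * Matrix.replicateRow Unit (fun j => x j)) := by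
      ext i j
      simp only [Matrix.of_apply, Matrix.smul_apply, Matrix.add_apply, Matrix.one_apply,
        Matrix.mul_apply, Matrix.replicateCol_apply, Matrix.replicateRow_apply, Finset.univ_unique,
        Finset.sum_singleton, smul_eq_mul]
      by_cases h : i = j
      · rw [if_pos h.symm, if_pos h]
        field_simp
      · rw [if_neg (Ne.symm h), if_neg h]
        field_simp
    have hsum : dotProduct (fun j => x j) (fun i => b/a * x i) = b/a * ‖x‖^2 := by
      simp only [dotProduct]
      rw [← hnorm, Finset.mul_sum]
      exact Finset.sum_congr rfl fun i _ => by ring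
    rw [hM, Matrix.det_smul, Matrix.det_one_add_replicateCol_mul_replicateRow, hsum, Fintype.card_fin]
  -- assemble
  have hMeq : (Matrix.of fun i j : Fin (k+1) =>
      fderiv ℝ (fun y : EuclideanSpace ℝ (Fin (k+1)) =>
        fderiv ℝ (fun z => ‖z‖^2/2 - t + δ*(‖z‖^2 - t)^((2-β)/2)) y (EuclideanSpace.single j 1)) x
        (EuclideanSpace.single i 1))
      = Matrix.of (fun i j : Fin (k+1) => a * (if j = i then 1 else 0) + b * x i * x j) := by
    ext i j
    simp only [Matrix.of_apply]
    exact hHess i j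
  rw [hderiv, hMeq, hdet, hpow (-β), hpow (-β-2), hpow (-(2*β)),
    show ((-β)/2 : ℝ) = p from by rw [hp_def]; ring,
    show ((-β-2)/2 : ℝ) = p - 1 from by rw [hp_def]; ring]
  -- bounds
  set ε : ℝ := δ*((2-β)/2)*s^p with hε_def
  set η : ℝ := b*‖x‖^2 with hη_def
  set m : ℝ := δ*s^p with hm_def
  have hS0 : (0:ℝ) ≤ ‖x‖^2 := by positivity
  have hSs : ‖x‖^2 ≤ s := by rw [hs_def]; linarith
  have hm : m ≤ 1/2 := by
    have h1 : (2*δ) ^ (β⁻¹ : ℝ) ≤ Real.sqrt s := by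
      have := Real.rpow_nonneg (by positivity : (0:ℝ) ≤ 2*δ) (β⁻¹ : ℝ)
      linarith
    have h2 : 2*δ ≤ Real.sqrt s ^ β := by
      calc 2*δ = ((2*δ) ^ (β⁻¹ : ℝ)) ^ β := (Real.rpow_inv_rpow (by positivity) hβ0.ne').symm
        _ ≤ Real.sqrt s ^ β := Real.rpow_le_rpow (by positivity) h1 hβ0.le
    have h3 : Real.sqrt s ^ (-β) ≤ (2*δ)⁻¹ := by
      rw [Real.rpow_neg hR0.le]
      exact inv_anti₀ (by positivity) h2
    have h4 : s ^ p = Real.sqrt s ^ (-β) := by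
      rw [hpow (-β), show ((-β)/2 : ℝ) = p from by rw [hp_def]; ring]
    calc m = δ * s^p := hm_def
      _ ≤ δ * (2*δ)⁻¹ := by rw [h4]; exact mul_le_mul_of_nonneg_left h3 hδ.le
      _ = 1/2 := by field_simp
  have hε0 : (0:ℝ) ≤ ε := by
    rw [hε_def]
    exact mul_nonneg (mul_nonneg hδ.le (by linarith)) hsp.le
  have hε : |ε| ≤ m := by
    rw [abs_of_nonneg hε0, hε_def, hm_def]
    nlinarith [mul_pos hδ hsp, hβ0]
  have hη : |η| ≤ m := by
    have hb0 : b ≤ 0 := by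
      rw [hb_def]
      have hp0 : p < 0 := by rw [hp_def]; linarith
      have : (δ*(2-β)) * (p * s^(p-1)) ≤ 0 :=
        mul_nonpos_of_nonneg_of_nonpos (by positivity) (mul_nonpos_of_nonpos_of_nonneg hp0.le hsp1.le)
      linarith
    have habs : |η| = (-b)*‖x‖^2 := by
      rw [hη_def, abs_mul, abs_of_nonpos hb0, abs_of_nonneg hS0]
    rw [habs, hm_def, hsplit]
    have hbb : -b = δ*(2-β)*β*s^(p-1) := by
      rw [hb_def]
      linear_combination (-(δ*(2-β)*s^(p-1))) * hpβ
    rw [hbb]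
    have hββ : (2-β)*β ≤ 1 := by nlinarith [sq_nonneg (β-1)]
    have key : (2-β)*β*‖x‖^2 ≤ s := by nlinarith [hS0, hSs, hβ0]
    calc δ*(2-β)*β*s^(p-1)*‖x‖^2 = (δ*s^(p-1)) * ((2-β)*β*‖x‖^2) := by ring
      _ ≤ (δ*s^(p-1)) * s := mul_le_mul_of_nonneg_left key (by positivity)
      _ = δ*(s^(p-1)*s) := by ring
  have key := key_est k hm hε hη
  have hprod : a^(k+1) * (1 + b/a * ‖x‖^2) = (1+2*ε)^k * (1+2*ε+η) := by
    have ha : a = 1+2*ε := by rw [ha_def, hε_def]; ring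
    rw [pow_succ, hη_def, ← ha]
    field_simp
  rw [hprod]
  calc |(-(-1 + δ*((-1) * ((2-β)/2) * s^p))) * ((1+2*ε)^k * (1+2*ε+η)) -
        (1 + δ * (2 - β) * (((k+1:ℕ):ℝ) + 1 / 2) * s^p + δ * (β - 2) * β * s^(p-1) * ‖x‖ ^ 2)|
      = |(1+ε)*(1+2*ε)^k*(1+2*ε+η) - (1 + (2*(k:ℝ)+3)*ε + η)| := by
        congr 1
        rw [hε_def, hη_def, hb_def]
        push_cast
        linear_combination (δ*(2-β)*s^(p-1)*‖x‖^2) * hpβ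
    _ ≤ 10*3^k*((k:ℝ)+1) * m^2 := key
    _ = 10*3^k*((k:ℝ)+1)*δ^2 * s^((-(2*β))/2) := by
        rw [hm_def, mul_pow, show ((-(2*β))/2 : ℝ) = p*2 from by rw [hp_def]; ring,
          Real.rpow_mul hs0.le, Real.rpow_two]
        ring
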